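/- arXiv:2303.10242 — 2 statements merged into one kernel-verified Lean document; each statement's English description precedes it below -/
import Mathlib

section
/- There exist γ₀ > 0 and a constant C₁ > 0, and for every multi-index k ∈ ℕ₀³ a constant C₂ > 0 (depending on k), such that uniformly over γ ∈ (0,γ₀), ω ∈ [−N−1/2, N+1/2]³ and j ∈ {1,2,3}: (i) |K̂_γ(ω)| ≤ 1; (ii) |∂_j K̂_γ(ω)| ≤ C₁ γ³ (|γ³ω| ∧ 1); (iii) |D^k K̂_γ(ω)| ≤ C₂ γ^{3|k|₁}. -/
open scoped BigOperators
open Filter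

noncomputable section

abbrev V : Type := Fin 3 → ℝ
abbrev VZ : Type := Fin 3 → ℤ

/-- The Euclidean norm on `ℝ³`. -/
def euclNorm (x : V) : ℝ := Real.sqrt (∑ i, x i ^ 2)

/-- The embedding of `ℤ³` into `ℝ³`. -/
def toV (k : VZ) : V := fun i => (k i : ℝ)

/-- `N = ⌊γ⁻⁴⌋`. -/
def Ndef (γ : ℝ) : ℕ := ⌊γ⁻¹ ^ 4⌋₊

/-- `ε = 2/(2N+1)`. -/
def eps (γ : ℝ) : ℝ := 2 / (2 * (Ndef γ : ℝ) + 1)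

/-- `𝔢 = ε/γ`. -/
def frke (γ : ℝ) : ℝ := eps γ / γ

/-- `κ_{γ,3} = ε/γ⁴`. -/
def kappa3 (γ : ℝ) : ℝ := eps γ / γ ^ 4

/-- `κ_{γ,1}`, defined by `κ_{γ,1}⁻¹ = ∑_{k ∈ ℤ³} γ³ 𝔎(γk)`. -/
def kappa1 (K : V → ℝ) (γ : ℝ) : ℝ :=
  (∑ᶠ (k : VZ), γ ^ 3 * K (fun i => γ * (k i : ℝ)))⁻¹

/-- The discrete Fourier transform `K̂_γ` of the Kac kernel, extended to all `ω ∈ ℝ³`: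
`K̂_γ(ω) = κ_{γ,1} ∑_{k ∈ ℤ³} γ³ 𝔎(γk) cos(π γ³ ω·(γk))`. -/
def Khat (K : V → ℝ) (γ : ℝ) (ω : V) : ℝ :=
  kappa1 K γ *
    ∑ᶠ (k : VZ), γ ^ 3 * K (fun i => γ * (k i : ℝ)) *
      Real.cos (Real.pi * γ ^ 3 * ∑ i, ω i * (γ * (k i : ℝ)))

/-- The standing assumptions on the Kac interaction kernel `𝔎 : ℝ³ → [0,1]`: smooth,
compactly supported in `B(0, r⋆)`, rotation invariant, `𝔎(0) = 0`, `∫ 𝔎 = 1` and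
`∫ 𝔎(x)|x|² dx = 6`. -/
structure KacKernel (rstar : ℝ) (K : V → ℝ) : Prop where
  smooth : ∀ n : ℕ, ContDiff ℝ n K
  nonneg : ∀ x, 0 ≤ K x
  le_one : ∀ x, K x ≤ 1
  support_ball : ∀ x, rstar ≤ euclNorm x → K x = 0
  rot_inv : ∀ x y, euclNorm x = euclNorm y → K x = K y
  zero_at_zero : K 0 = 0
  integral_one : (∫ x : V, K x) = 1
  integral_sq : (∫ x : V, K x * euclNorm x ^ 2) = 6

/-- The cube `{ω ∈ ℤ³ : |ω|_∞ ≤ N}`. -/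
def ibox (N : ℕ) : Finset VZ := Fintype.piFinset fun _ => Finset.Icc (-(N : ℤ)) (N : ℤ)

/-- The punctured cube `{ω ∈ ℤ³ : 0 < |ω|_∞ ≤ N}`. -/
def iboxS (N : ℕ) : Finset VZ := (ibox N).erase 0

/-- The partial derivative `∂_j f` of a function on `ℝ³`. -/
def pd (j : Fin 3) (f : V → ℝ) : V → ℝ := fun ω => fderiv ℝ f ω (Pi.single j 1)

/-- The mixed derivative `D^k = ∂₁^{k₁}∂₂^{k₂}∂₃^{k₃}` for a multi-index `k ∈ ℕ₀³`. -/
def Dmulti (k : Fin 3 → ℕ) (f : V → ℝ) : V → ℝ :=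
  (pd 0)^[k 0] ((pd 1)^[k 1] ((pd 2)^[k 2] f))

section AuxLemmas

open Real

lemma euclNorm_nonneg' (x : V) : 0 ≤ euclNorm x := Real.sqrt_nonneg _

lemma abs_apply_le_euclNorm (x : V) (i : Fin 3) : |x i| ≤ euclNorm x := by
  rw [← Real.sqrt_sq_eq_abs]
  exact Real.sqrt_le_sqrt (Finset.single_le_sum (f := fun j => x j ^ 2)
    (fun j _ => sq_nonneg _) (Finset.mem_univ i))

lemma abs_dot_le (x y : V) : |∑ i, x i * y i| ≤ euclNorm x * euclNorm y := by
  rw [← Real.sqrt_sq_eq_abs, euclNorm, euclNorm, ← Real.sqrt_mul (by positivity)]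
  exact Real.sqrt_le_sqrt (Finset.sum_mul_sq_le_sq_mul_sq Finset.univ x y)

/-- The continuous linear map `ω ↦ ∑ i, a i * ω i`. -/
noncomputable def lmap (a : V) : V →L[ℝ] ℝ :=
  ∑ i, a i • (ContinuousLinearMap.proj i : V →L[ℝ] ℝ)

lemma lmap_apply (a ω : V) : lmap a ω = ∑ i, a i * ω i := by
  simp [lmap]

lemma lmap_single (a : V) (j : Fin 3) : lmap a (Pi.single j 1) = a j := by
  rw [lmap_apply]
  simp [Pi.single_apply, mul_ite]

/-- Finite linear combinations of cosines of linear forms with a common phase. -/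
noncomputable def cosP (F : Finset VZ) (c : VZ → ℝ) (a : VZ → V) (t : ℝ) : V → ℝ :=
  fun ω => ∑ k ∈ F, c k * Real.cos (lmap (a k) ω + t)

lemma hasFDerivAt_cosP (F : Finset VZ) (c : VZ → ℝ) (a : VZ → V) (t : ℝ) (ω : V) :
    HasFDerivAt (cosP F c a t)
      (∑ k ∈ F, (c k * -Real.sin (lmap (a k) ω + t)) • lmap (a k)) ω := by
  rw [show cosP F c a t = ∑ k ∈ F, (fun ω : V => c k * Real.cos (lmap (a k) ω + t)) from by
    funext ω; simp [cosP, Finset.sum_apply]]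
  apply HasFDerivAt.sum
  intro k _
  have h1 : HasFDerivAt (fun ω : V => lmap (a k) ω + t) (lmap (a k)) ω :=
    (lmap (a k)).hasFDerivAt.add_const t
  have h2 := (Real.hasDerivAt_cos (lmap (a k) ω + t)).comp_hasFDerivAt ω h1
  have h3 := h2.const_mul (c k)
  have : (c k * -Real.sin (lmap (a k) ω + t)) • lmap (a k)
      = c k • ((-Real.sin (lmap (a k) ω + t)) • lmap (a k)) := by
    rw [smul_smul]
  rw [this]
  exact h3

lemma pd_cosP (F : Finset VZ) (c : VZ → ℝ) (a : VZ → V) (t : ℝ) (j : Fin 3) :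
    pd j (cosP F c a t) = cosP F (fun k => a k j * c k) a (t + Real.pi / 2) := by
  funext ω
  show fderiv ℝ (cosP F c a t) ω (Pi.single j 1) = _
  rw [(hasFDerivAt_cosP F c a t ω).fderiv, ContinuousLinearMap.sum_apply]
  refine Finset.sum_congr rfl fun k _ => ?_
  rw [ContinuousLinearMap.smul_apply, lmap_single, smul_eq_mul,
    ← add_assoc, Real.cos_add_pi_div_two]
  ring

lemma pd_iter_cosP (j : Fin 3) (n : ℕ) (F : Finset VZ) (c : VZ → ℝ) (a : VZ → V) (t : ℝ) :
    (pd j)^[n] (cosP F c a t)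
      = cosP F (fun k => a k j ^ n * c k) a (t + n * (Real.pi / 2)) := by
  induction n generalizing c t with
  | zero => simp
  | succ n ih =>
      rw [Function.iterate_succ_apply, pd_cosP, ih]
      have hc : (fun k => a k j ^ n * (a k j * c k))
          = (fun k => a k j ^ (n + 1) * c k) := by funext k; ring
      have ht : t + Real.pi / 2 + n * (Real.pi / 2)
          = t + ((n : ℕ) + 1 : ℕ) * (Real.pi / 2) := by push_cast; ring
      rw [hc, ht]

lemma Dmulti_cosP (m : Fin 3 → ℕ) (F : Finset VZ) (c : VZ → ℝ) (a : VZ → V) (t : ℝ) :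
    Dmulti m (cosP F c a t)
      = cosP F (fun k => a k 0 ^ m 0 * (a k 1 ^ m 1 * (a k 2 ^ m 2 * c k))) a
          (t + m 2 * (Real.pi / 2) + m 1 * (Real.pi / 2) + m 0 * (Real.pi / 2)) := by
  unfold Dmulti
  rw [pd_iter_cosP, pd_iter_cosP, pd_iter_cosP]

lemma cosP_abs_le (F : Finset VZ) (c : VZ → ℝ) (a : VZ → V) (t : ℝ) (ω : V)
    (hc : ∀ k ∈ F, 0 ≤ c k) : |cosP F c a t ω| ≤ ∑ k ∈ F, c k := by
  refine (Finset.abs_sum_le_sum_abs _ _).trans (Finset.sum_le_sum fun k hk => ?_)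
  rw [abs_mul, abs_of_nonneg (hc k hk)]
  exact mul_le_of_le_one_right (hc k hk) (Real.abs_cos_le_one _)

lemma min_helper (b x : ℝ) (hx : 0 ≤ x) : min 1 (b * x) ≤ max b 1 * min x 1 := by
  rcases le_total x 1 with h | h
  · rw [min_eq_left h]
    exact (min_le_right _ _).trans (mul_le_mul_of_nonneg_right (le_max_left _ _) hx)
  · rw [min_eq_right h, mul_one]
    exact (min_le_left _ _).trans (le_max_right _ _)

end AuxLemmas

/-- Uniform bounds for `K̂_γ` and its derivatives on
`[−N−1/2, N+1/2]³`: `|K̂_γ(ω)| ≤ 1`, `|∂_j K̂_γ(ω)| ≤ C₁ γ³(|γ³ω| ∧ 1)` and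
`|D^k K̂_γ(ω)| ≤ C₂ γ^{3|k|₁}`. -/
theorem Khat_derivative_bounds (rstar : ℝ) (hrstar : 0 < rstar)
    (K : V → ℝ) (hK : KacKernel rstar K) :
    ∃ γ₀ > (0 : ℝ), ∃ C₁ > (0 : ℝ), ∀ k : Fin 3 → ℕ, ∃ C₂ > (0 : ℝ),
      ∀ γ ∈ Set.Ioo (0 : ℝ) γ₀, ∀ ω : V, (∀ i, |ω i| ≤ (Ndef γ : ℝ) + 1 / 2) →
        |Khat K γ ω| ≤ 1 ∧
          (∀ j : Fin 3,
            |pd j (Khat K γ) ω| ≤ C₁ * γ ^ 3 * min (γ ^ 3 * euclNorm ω) 1) ∧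
            |Dmulti k (Khat K γ) ω| ≤ C₂ * γ ^ (3 * (k 0 + k 1 + k 2)) := by
  classical
  have hπ : (0 : ℝ) < Real.pi := Real.pi_pos
  -- a point where K is positive
  obtain ⟨x0, hx0⟩ : ∃ x : V, K x ≠ 0 := by
    by_contra h
    push_neg at h
    have h1 := hK.integral_one
    simp only [h, MeasureTheory.integral_zero] at h1
    norm_num at h1
  have hx0pos : 0 < K x0 := (hK.nonneg x0).lt_of_ne (Ne.symm hx0)
  -- continuity gives a ball where K > K x0 / 2
  obtain ⟨δ, hδ, hball⟩ : ∃ δ > (0 : ℝ), ∀ y : V, dist y x0 < δ → K x0 / 2 < K y := by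
    have hca : ContinuousAt K x0 := ((hK.smooth 0).continuous).continuousAt
    obtain ⟨δ, hδ, h3⟩ := Metric.continuousAt_iff.1 hca (K x0 / 2) (by positivity)
    refine ⟨δ, hδ, fun y hy => ?_⟩
    have := h3 hy
    rw [Real.dist_eq, abs_sub_lt_iff] at this
    linarith [this.2]
  refine ⟨δ, hδ, Real.pi * rstar * max (Real.pi * rstar) 1, by positivity, fun m => ?_⟩
  refine ⟨(Real.pi * rstar) ^ (m 0 + m 1 + m 2), by positivity, ?_⟩
  rintro γ ⟨hγ0, hγδ⟩ ω -
  set M : ℕ := ⌈rstar / γ⌉₊ with hM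
  set Fγ : Finset VZ := ibox M with hF
  -- support facts
  have hr : ∀ k : VZ, K (fun i => γ * (k i : ℝ)) ≠ 0 →
      euclNorm (fun i => γ * (k i : ℝ)) < rstar := by
    intro k hk
    by_contra h
    push_neg at h
    exact hk (hK.support_ball _ h)
  have hsub : ∀ k : VZ, K (fun i => γ * (k i : ℝ)) ≠ 0 → k ∈ Fγ := by
    intro k hk
    have h1 := hr k hk
    rw [hF, ibox, Fintype.mem_piFinset]
    intro i
    rw [Finset.mem_Icc, ← abs_le]
    have h2 : |γ * (k i : ℝ)| < rstar :=
      (abs_apply_le_euclNorm (fun i => γ * (k i : ℝ)) i).trans_lt h1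
    rw [abs_mul, abs_of_pos hγ0] at h2
    have h3 : |(k i : ℝ)| < rstar / γ := (lt_div_iff₀' hγ0).2 h2
    have h4 : (|k i| : ℝ) < (M : ℝ) := by
      exact h3.trans_le (Nat.le_ceil _)
    exact_mod_cast h4.le
  -- positivity of the normalization sum
  set k0 : VZ := fun i => round (x0 i / γ) with hk0def
  have hk0 : K x0 / 2 < K (fun i => γ * (k0 i : ℝ)) := by
    apply hball
    rw [dist_pi_lt_iff hδ]
    intro i
    rw [Real.dist_eq]
    have he : γ * (k0 i : ℝ) - x0 i = γ * ((round (x0 i / γ) : ℝ) - x0 i / γ) := by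
      rw [hk0def]
      field_simp
    rw [he, abs_mul, abs_of_pos hγ0, ← abs_neg, neg_sub]
    have h5 : |x0 i / γ - (round (x0 i / γ) : ℝ)| ≤ 1 / 2 := abs_sub_round _
    nlinarith
  have hk0pos : 0 < K (fun i => γ * (k0 i : ℝ)) := lt_trans (by positivity) hk0
  set S : ℝ := ∑ k ∈ Fγ, γ ^ 3 * K (fun i => γ * (k i : ℝ)) with hSdef
  have hS : 0 < S := by
    have hk0F : k0 ∈ Fγ := hsub k0 (ne_of_gt hk0pos)
    have h6 : γ ^ 3 * K (fun i => γ * (k0 i : ℝ)) ≤ S :=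
      Finset.single_le_sum (f := fun k : VZ => γ ^ 3 * K (fun i => γ * (k i : ℝ)))
        (fun k _ => mul_nonneg (pow_pos hγ0 3).le (hK.nonneg _)) hk0F
    exact lt_of_lt_of_le (mul_pos (pow_pos hγ0 3) hk0pos) h6
  have hkap1 : kappa1 K γ = S⁻¹ := by
    rw [kappa1, hSdef]
    congr 1
    refine finsum_eq_sum_of_support_subset _ fun k hk => hsub k fun h => ?_
    simp only [Function.mem_support] at hk
    exact hk (by rw [h, mul_zero])
  have hκpos : 0 < kappa1 K γ := by rw [hkap1]; exact inv_pos.2 hS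
  set c : VZ → ℝ := fun k => kappa1 K γ * (γ ^ 3 * K (fun i => γ * (k i : ℝ))) with hc
  have hcsum : ∑ k ∈ Fγ, c k = 1 := by
    rw [hc, ← Finset.mul_sum, ← hSdef, hkap1, inv_mul_cancel₀ hS.ne']
  have hcnn : ∀ k, 0 ≤ c k :=
    fun k => mul_nonneg hκpos.le (mul_nonneg (pow_pos hγ0 3).le (hK.nonneg _))
  set a : VZ → V := fun k i => Real.pi * γ ^ 3 * (γ * (k i : ℝ)) with ha
  -- representation of Khat
  have hrep : Khat K γ = cosP Fγ c a 0 := by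
    funext ω'
    rw [Khat]
    have hsupp2 : Function.support (fun k : VZ => γ ^ 3 * K (fun i => γ * (k i : ℝ)) *
        Real.cos (Real.pi * γ ^ 3 * ∑ i, ω' i * (γ * (k i : ℝ)))) ⊆ ↑Fγ := by
      intro k hk
      simp only [Function.mem_support] at hk
      refine hsub k fun h => hk ?_
      rw [h, mul_zero, zero_mul]
    rw [finsum_eq_sum_of_support_subset _ hsupp2, Finset.mul_sum]
    refine Finset.sum_congr rfl fun k _ => ?_
    rw [hc, ha]
    have harg : Real.pi * γ ^ 3 * ∑ i, ω' i * (γ * (k i : ℝ))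
        = lmap (fun i => Real.pi * γ ^ 3 * (γ * (k i : ℝ))) ω' + 0 := by
      rw [lmap_apply, add_zero, Finset.mul_sum]
      exact Finset.sum_congr rfl fun i _ => by ring
    rw [harg]
    ring
  -- bound on |a k j| on the support
  have hab : ∀ k : VZ, K (fun i => γ * (k i : ℝ)) ≠ 0 → ∀ j : Fin 3,
      |a k j| ≤ Real.pi * rstar * γ ^ 3 := by
    intro k hk j
    have h1 : |γ * (k j : ℝ)| ≤ rstar :=
      ((abs_apply_le_euclNorm (fun i => γ * (k i : ℝ)) j).trans_lt (hr k hk)).le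
    rw [ha]
    simp only
    rw [abs_mul, abs_of_pos (mul_pos hπ (pow_pos hγ0 3))]
    calc Real.pi * γ ^ 3 * |γ * (k j : ℝ)| ≤ Real.pi * γ ^ 3 * rstar := by
          exact mul_le_mul_of_nonneg_left h1 (mul_pos hπ (pow_pos hγ0 3)).le
      _ = Real.pi * rstar * γ ^ 3 := by ring
  -- bound on the linear form on the support
  have hlin : ∀ k : VZ, K (fun i => γ * (k i : ℝ)) ≠ 0 →
      |lmap (a k) ω| ≤ Real.pi * rstar * γ ^ 3 * euclNorm ω := by
    intro k hk
    rw [lmap_apply]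
    have h1 : ∑ i, a k i * ω i
        = Real.pi * γ ^ 3 * ∑ i, (γ * (k i : ℝ)) * ω i := by
      rw [Finset.mul_sum]
      exact Finset.sum_congr rfl fun i _ => by rw [ha]; ring
    rw [h1, abs_mul, abs_of_pos (mul_pos hπ (pow_pos hγ0 3))]
    calc Real.pi * γ ^ 3 * |∑ i, (γ * (k i : ℝ)) * ω i|
        ≤ Real.pi * γ ^ 3 * (rstar * euclNorm ω) := by
          refine mul_le_mul_of_nonneg_left ?_ (mul_pos hπ (pow_pos hγ0 3)).le
          exact (abs_dot_le _ ω).trans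
            (mul_le_mul_of_nonneg_right (hr k hk).le (euclNorm_nonneg' ω))
      _ = Real.pi * rstar * γ ^ 3 * euclNorm ω := by ring
  -- the trivial zero-on-kernel fact for c
  have hczero : ∀ k : VZ, K (fun i => γ * (k i : ℝ)) = 0 → c k = 0 := by
    intro k hk
    rw [hc]
    simp [hk]
  refine ⟨?_, ?_, ?_⟩
  · -- (i)
    rw [hrep]
    exact (cosP_abs_le _ _ _ _ _ fun k _ => hcnn k).trans (le_of_eq hcsum)
  · -- (ii)
    intro j
    rw [hrep, pd_cosP]
    set B : ℝ := Real.pi * rstar * γ ^ 3 with hB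
    have hBpos : 0 < B := mul_pos (mul_pos hπ hrstar) (pow_pos hγ0 3)
    set mm : ℝ := min 1 (B * euclNorm ω) with hmm
    have hmmnn : 0 ≤ mm := le_min one_pos.le (mul_nonneg hBpos.le (euclNorm_nonneg' ω))
    have hterm : ∀ k ∈ Fγ,
        |a k j * c k * Real.cos (lmap (a k) ω + (0 + Real.pi / 2))| ≤ B * mm * c k := by
      intro k _
      by_cases hk : K (fun i => γ * (k i : ℝ)) = 0
      · rw [hczero k hk]
        simp
      · rw [zero_add, Real.cos_add_pi_div_two, abs_mul, abs_neg, abs_mul,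
          abs_of_nonneg (hcnn k)]
        have h1 : |Real.sin (lmap (a k) ω)| ≤ mm := by
          refine le_min (Real.abs_sin_le_one _) ?_
          exact (Real.abs_sin_le_abs).trans ((hlin k hk).trans
            (mul_le_mul_of_nonneg_right le_rfl (euclNorm_nonneg' ω)))
        calc |a k j| * c k * |Real.sin (lmap (a k) ω)|
            ≤ B * c k * mm := by
              refine mul_le_mul (mul_le_mul_of_nonneg_right (hab k hk j) (hcnn k)) h1
                (abs_nonneg _) (mul_nonneg hBpos.le (hcnn k))
          _ = B * mm * c k := by ring
    have hsum : |cosP Fγ (fun k => a k j * c k) a (0 + Real.pi / 2) ω| ≤ B * mm := by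
      refine (Finset.abs_sum_le_sum_abs _ _).trans ?_
      calc ∑ k ∈ Fγ, |a k j * c k * Real.cos (lmap (a k) ω + (0 + Real.pi / 2))|
          ≤ ∑ k ∈ Fγ, B * mm * c k := Finset.sum_le_sum hterm
        _ = B * mm * ∑ k ∈ Fγ, c k := by rw [Finset.mul_sum]
        _ = B * mm := by rw [hcsum, mul_one]
    refine hsum.trans ?_
    have hkey : mm ≤ max (Real.pi * rstar) 1 * min (γ ^ 3 * euclNorm ω) 1 := by
      have := min_helper (Real.pi * rstar) (γ ^ 3 * euclNorm ω)
        (mul_nonneg (pow_pos hγ0 3).le (euclNorm_nonneg' ω))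
      rw [hmm, hB]
      calc min 1 (Real.pi * rstar * γ ^ 3 * euclNorm ω)
          = min 1 (Real.pi * rstar * (γ ^ 3 * euclNorm ω)) := by ring_nf
        _ ≤ max (Real.pi * rstar) 1 * min (γ ^ 3 * euclNorm ω) 1 := this
    calc B * mm ≤ B * (max (Real.pi * rstar) 1 * min (γ ^ 3 * euclNorm ω) 1) :=
          mul_le_mul_of_nonneg_left hkey hBpos.le
      _ = Real.pi * rstar * max (Real.pi * rstar) 1 * γ ^ 3
            * min (γ ^ 3 * euclNorm ω) 1 := by rw [hB]; ring
  · -- (iii)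
    rw [hrep, Dmulti_cosP]
    set B : ℝ := Real.pi * rstar * γ ^ 3 with hB
    have hBpos : 0 < B := mul_pos (mul_pos hπ hrstar) (pow_pos hγ0 3)
    have hterm : ∀ k ∈ Fγ,
        |a k 0 ^ m 0 * (a k 1 ^ m 1 * (a k 2 ^ m 2 * c k)) *
            Real.cos (lmap (a k) ω +
              (0 + m 2 * (Real.pi / 2) + m 1 * (Real.pi / 2) + m 0 * (Real.pi / 2)))|
          ≤ B ^ (m 0 + m 1 + m 2) * c k := by
      intro k _
      by_cases hk : K (fun i => γ * (k i : ℝ)) = 0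
      · rw [hczero k hk]
        simp
      · have h1 : ∀ j : Fin 3, |a k j| ^ m j ≤ B ^ m j :=
          fun j => pow_le_pow_left₀ (abs_nonneg _) (hab k hk j) _
        calc |a k 0 ^ m 0 * (a k 1 ^ m 1 * (a k 2 ^ m 2 * c k)) * Real.cos _|
            ≤ |a k 0 ^ m 0 * (a k 1 ^ m 1 * (a k 2 ^ m 2 * c k))| := by
              rw [abs_mul]
              exact mul_le_of_le_one_right (abs_nonneg _) (Real.abs_cos_le_one _)
          _ = |a k 0| ^ m 0 * (|a k 1| ^ m 1 * (|a k 2| ^ m 2 * c k)) := by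
              rw [abs_mul, abs_mul, abs_mul, abs_pow, abs_pow, abs_pow,
                abs_of_nonneg (hcnn k)]
          _ ≤ B ^ m 0 * (B ^ m 1 * (B ^ m 2 * c k)) := by
              have h2 : 0 ≤ |a k 2| ^ m 2 * c k :=
                mul_nonneg (pow_nonneg (abs_nonneg _) _) (hcnn k)
              have h3 : 0 ≤ |a k 1| ^ m 1 * (|a k 2| ^ m 2 * c k) :=
                mul_nonneg (pow_nonneg (abs_nonneg _) _) h2
              refine mul_le_mul (h1 0) ?_ h3 (pow_nonneg hBpos.le _)
              refine mul_le_mul (h1 1) ?_ h2 (pow_nonneg hBpos.le _)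
              exact mul_le_mul_of_nonneg_right (h1 2) (hcnn k)
          _ = B ^ (m 0 + m 1 + m 2) * c k := by rw [pow_add, pow_add]; ring
    have hsum : |cosP Fγ (fun k => a k 0 ^ m 0 * (a k 1 ^ m 1 * (a k 2 ^ m 2 * c k))) a
        (0 + m 2 * (Real.pi / 2) + m 1 * (Real.pi / 2) + m 0 * (Real.pi / 2)) ω|
        ≤ B ^ (m 0 + m 1 + m 2) := by
      refine (Finset.abs_sum_le_sum_abs _ _).trans ?_
      calc (∑ k ∈ Fγ, |a k 0 ^ m 0 * (a k 1 ^ m 1 * (a k 2 ^ m 2 * c k)) *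
              Real.cos (lmap (a k) ω + (0 + m 2 * (Real.pi / 2) + m 1 * (Real.pi / 2)
                + m 0 * (Real.pi / 2)))|)
          ≤ ∑ k ∈ Fγ, B ^ (m 0 + m 1 + m 2) * c k := Finset.sum_le_sum hterm
        _ = B ^ (m 0 + m 1 + m 2) * ∑ k ∈ Fγ, c k := by rw [Finset.mul_sum]
        _ = B ^ (m 0 + m 1 + m 2) := by rw [hcsum, mul_one]
    refine hsum.trans (le_of_eq ?_)
    rw [hB, mul_pow, pow_mul]
end
end

section
/- For every multi-index k ∈ ℕ₀³ and every m ∈ ℕ₀ there exist a constant C > 0 and γ₀ > 0 such that |γ³ω|^{2m} · |D^k K̂_γ(ω)| ≤ C γ^{3|k|₁} uniformly over γ ∈ (0,γ₀) and ω ∈ [−N−1/2, N+1/2]³ (polynomial decay of all derivatives of the Fourier transform of the Kac kernel on the scale |ω| ≳ γ⁻³). -/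
open scoped BigOperators
open Filter

noncomputable section

namespace KhatAux

open Real

/-- dot product of `ω : V` with an integer vector. -/
def dz (ω : V) (k : VZ) : ℝ := ∑ i, ω i * (k i : ℝ)

/-- scaling of an integer vector into `V`. -/
def sc (γ : ℝ) (k : VZ) : V := fun i => γ * (k i : ℝ)

/-- generic trigonometric sum. -/
def S (c : ℝ) (n : ℕ) (h : VZ → ℝ) : V → ℝ :=
  fun ω => ∑ᶠ k : VZ, h k * Real.cos (c * dz ω k + n * (Real.pi / 2))

lemma support_mul_subset (h : VZ → ℝ) (F : VZ → ℝ) :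
    (Function.support fun k => h k * F k) ⊆ Function.support h := by
  intro k hk
  simp only [Function.mem_support] at hk ⊢
  intro h0; apply hk; rw [h0, zero_mul]

lemma S_eq_sum {h : VZ → ℝ} {T : Finset VZ} (hT : Function.support h ⊆ ↑T)
    (c : ℝ) (n : ℕ) (ω : V) :
    S c n h ω = ∑ k ∈ T, h k * Real.cos (c * dz ω k + n * (Real.pi / 2)) := by
  apply finsum_eq_finset_sum_of_support_subset
  exact (support_mul_subset _ _).trans hT

lemma pd_S (c : ℝ) (n : ℕ) (j : Fin 3) (h : VZ → ℝ)
    (hfin : (Function.support h).Finite) :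
    pd j (S c n h) = S c (n + 1) (fun k => (c * (k j : ℝ)) * h k) := by
  classical
  funext ω
  set T := hfin.toFinset with hTdef
  have hT : Function.support h ⊆ ↑T := by
    intro k hk; simp [hTdef, hk]
  have hS : S c n h = fun ω' => ∑ k ∈ T, h k * Real.cos (c * dz ω' k + n * (Real.pi / 2)) :=
    funext fun ω' => S_eq_sum hT c n ω'
  set D : VZ → (V →L[ℝ] ℝ) := fun k =>
    ∑ i, (k i : ℝ) • ContinuousLinearMap.proj (R := ℝ) (φ := fun _ : Fin 3 => ℝ) i with hD
  have key : ∀ k : VZ, HasFDerivAt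
      (fun ω' : V => h k * Real.cos (c * dz ω' k + n * (Real.pi / 2)))
      (h k • ((-Real.sin (c * dz ω k + n * (Real.pi / 2))) • (c • D k))) ω := by
    intro k
    have h2 : HasFDerivAt (fun ω' : V => dz ω' k) (D k) ω := by
      have h1 : ∀ i : Fin 3, HasFDerivAt (fun ω' : V => ω' i * (k i : ℝ))
          ((k i : ℝ) • ContinuousLinearMap.proj (R := ℝ) (φ := fun _ : Fin 3 => ℝ) i) ω := by
        intro i
        exact (ContinuousLinearMap.proj (R := ℝ) (φ := fun _ : Fin 3 => ℝ) i).hasFDerivAt.mul_const _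
      have := HasFDerivAt.fun_sum (fun i (_ : i ∈ Finset.univ) => h1 i)
      simpa [dz, hD] using this
    exact (((h2.const_mul c).add_const ((n : ℝ) * (Real.pi / 2))).cos).const_mul (h k)
  have hDer : HasFDerivAt (fun ω' => ∑ k ∈ T, h k * Real.cos (c * dz ω' k + n * (Real.pi / 2)))
      (∑ k ∈ T, h k • ((-Real.sin (c * dz ω k + n * (Real.pi / 2))) • (c • D k))) ω :=
    HasFDerivAt.fun_sum fun k _ => key k
  have hT' : Function.support (fun k => (c * (k j : ℝ)) * h k) ⊆ ↑T := by
    intro k hk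
    apply hT
    simp only [Function.mem_support] at hk ⊢
    intro h0; apply hk; rw [h0, mul_zero]
  have hend : S c (n + 1) (fun k => (c * (k j : ℝ)) * h k) ω
      = ∑ k ∈ T, (c * (k j : ℝ)) * h k * Real.cos (c * dz ω k + (n + 1 : ℕ) * (Real.pi / 2)) :=
    S_eq_sum hT' c (n + 1) ω
  have hpd : pd j (S c n h) ω = fderiv ℝ (S c n h) ω (Pi.single j 1) := rfl
  rw [hpd, hS, hDer.fderiv, hend]
  rw [ContinuousLinearMap.sum_apply]
  apply Finset.sum_congr rfl
  intro k _
  have hDapp : D k (Pi.single j 1) = (k j : ℝ) := by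
    rw [hD]
    simp only [ContinuousLinearMap.sum_apply, ContinuousLinearMap.smul_apply,
      ContinuousLinearMap.proj_apply, smul_eq_mul, Pi.single_apply]
    simp [Finset.sum_ite_eq', mul_ite]
  have hcast : ((n + 1 : ℕ) : ℝ) * (Real.pi / 2)
      = (n : ℝ) * (Real.pi / 2) + Real.pi / 2 := by push_cast; ring
  rw [hcast, ← add_assoc, Real.cos_add_pi_div_two]
  simp only [ContinuousLinearMap.smul_apply, smul_eq_mul, hDapp]
  ring

lemma pd_iter_S (c : ℝ) (j : Fin 3) (p : ℕ) (n : ℕ) (h : VZ → ℝ)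
    (hfin : (Function.support h).Finite) :
    (pd j)^[p] (S c n h) = S c (n + p) (fun k => (c * (k j : ℝ)) ^ p * h k) := by
  induction p with
  | zero =>
    simp only [Function.iterate_zero_apply, pow_zero, one_mul, Nat.add_zero]
  | succ p ih =>
    rw [Function.iterate_succ_apply', ih]
    have hfin' : (Function.support fun k => (c * (k j : ℝ)) ^ p * h k).Finite :=
      hfin.subset (by
        intro k hk
        simp only [Function.mem_support] at hk ⊢
        intro h0; apply hk; rw [h0, mul_zero])
    rw [pd_S c (n + p) j _ hfin']
    have : (fun k : VZ => c * (k j : ℝ) * ((c * (k j : ℝ)) ^ p * h k))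
        = fun k : VZ => (c * (k j : ℝ)) ^ (p + 1) * h k := by
      funext k; ring
    rw [this]
    rfl

end KhatAux
namespace KhatAux

open Real

/-- unit integer vector. -/
def eZ (j : Fin 3) : VZ := Pi.single j 1

/-- discrete (negative) Laplacian in direction `j`. -/
def LZ (j : Fin 3) (h : VZ → ℝ) : VZ → ℝ :=
  fun k => 2 * h k - h (k - eZ j) - h (k + eZ j)

lemma shift_fin (h : VZ → ℝ) (hfin : (Function.support h).Finite) (a : VZ) :
    (Function.support fun k : VZ => h (k + a)).Finite := by
  have : (Function.support fun k : VZ => h (k + a)) = (fun k : VZ => k + a) ⁻¹' Function.support h := rfl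
  rw [this]
  exact hfin.preimage (((Equiv.addRight a).injective).injOn)

lemma shift_fin' (h : VZ → ℝ) (hfin : (Function.support h).Finite) (a : VZ) :
    (Function.support fun k : VZ => h (k - a)).Finite := by
  have : (Function.support fun k : VZ => h (k - a)) = (fun k : VZ => k - a) ⁻¹' Function.support h := rfl
  rw [this]
  exact hfin.preimage (((Equiv.subRight a).injective).injOn)

lemma LZ_fin (j : Fin 3) (h : VZ → ℝ) (hfin : (Function.support h).Finite) :
    (Function.support (LZ j h)).Finite := by
  have h1 := shift_fin' h hfin (eZ j)
  have h2 := shift_fin h hfin (eZ j)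
  apply Set.Finite.subset ((hfin.union h1).union h2)
  intro k hk
  simp only [Function.mem_support, LZ] at hk
  by_contra hc
  simp only [Set.mem_union, Function.mem_support, not_or, not_not] at hc
  apply hk
  rw [hc.1.1, hc.1.2, hc.2]
  ring

lemma dz_add (ω : V) (k : VZ) (j : Fin 3) : dz ω (k + eZ j) = dz ω k + ω j := by
  classical
  simp only [dz, eZ]
  have hterm : ∀ i : Fin 3, ω i * (((k + (Pi.single j 1 : VZ)) i : ℤ) : ℝ)
      = ω i * ((k i : ℤ) : ℝ) + (if i = j then ω i else 0) := by
    intro i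
    simp only [Pi.add_apply, Pi.single_apply]
    push_cast
    split <;> ring
  rw [Finset.sum_congr rfl fun i _ => hterm i, Finset.sum_add_distrib,
    Finset.sum_ite_eq' Finset.univ j fun i => ω i]
  simp

lemma dz_sub (ω : V) (k : VZ) (j : Fin 3) : dz ω (k - eZ j) = dz ω k - ω j := by
  have := dz_add ω (k - eZ j) j
  rw [sub_add_cancel] at this
  linarith

lemma S_LZ (c : ℝ) (n : ℕ) (j : Fin 3) (h : VZ → ℝ)
    (hfin : (Function.support h).Finite) (ω : V) :
    S c n (LZ j h) ω = (2 - 2 * Real.cos (c * ω j)) * S c n h ω := by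
  classical
  set F : VZ → ℝ := fun k => Real.cos (c * dz ω k + n * (Real.pi / 2)) with hF
  have key : ∀ k : VZ, F (k + eZ j) + F (k - eZ j) = 2 * Real.cos (c * ω j) * F k := by
    intro k
    rw [hF]
    simp only
    rw [dz_add, dz_sub]
    have e1 : c * (dz ω k + ω j) + n * (Real.pi / 2)
        = (c * dz ω k + n * (Real.pi / 2)) + c * ω j := by ring
    have e2 : c * (dz ω k - ω j) + n * (Real.pi / 2)
        = (c * dz ω k + n * (Real.pi / 2)) - c * ω j := by ring
    rw [e1, e2, Real.cos_add, Real.cos_sub]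
    ring
  have fin1 : (Function.support fun k : VZ => 2 * h k * F k).Finite :=
    hfin.subset (by
      intro k hk; simp only [Function.mem_support] at hk ⊢
      intro h0; apply hk; rw [h0]; ring)
  have fin2 : (Function.support fun k : VZ => h (k - eZ j) * F k).Finite :=
    (shift_fin' h hfin (eZ j)).subset (support_mul_subset _ _)
  have fin3 : (Function.support fun k : VZ => h (k + eZ j) * F k).Finite :=
    (shift_fin h hfin (eZ j)).subset (support_mul_subset _ _)
  have fin23 : (Function.support fun k : VZ => h (k - eZ j) * F k + h (k + eZ j) * F k).Finite :=
    (fin2.union fin3).subset (Function.support_add _ _)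
  have step1 : S c n (LZ j h) ω
      = ∑ᶠ k : VZ, (2 * h k * F k - (h (k - eZ j) * F k + h (k + eZ j) * F k)) := by
    rw [S]
    congr 1
    funext k
    rw [hF]
    simp only [LZ]
    ring
  rw [step1, finsum_sub_distrib fin1 fin23, finsum_add_distrib fin2 fin3]
  have shiftA : (∑ᶠ k : VZ, h (k - eZ j) * F k) = ∑ᶠ k : VZ, h k * F (k + eZ j) := by
    have := finsum_comp_equiv (f := fun k : VZ => h (k - eZ j) * F k) (Equiv.addRight (eZ j))
    rw [← this]
    congr 1
    funext k
    simp [Equiv.coe_addRight, add_sub_cancel_right]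
  have shiftB : (∑ᶠ k : VZ, h (k + eZ j) * F k) = ∑ᶠ k : VZ, h k * F (k - eZ j) := by
    have := finsum_comp_equiv (f := fun k : VZ => h (k + eZ j) * F k) (Equiv.subRight (eZ j))
    rw [← this]
    congr 1
    funext k
    simp [Equiv.subRight_apply, sub_add_cancel]
  rw [shiftA, shiftB]
  have finhFp : (Function.support fun k : VZ => h k * F (k + eZ j)).Finite :=
    hfin.subset (support_mul_subset _ _)
  have finhFm : (Function.support fun k : VZ => h k * F (k - eZ j)).Finite :=
    hfin.subset (support_mul_subset _ _)
  have comb : (∑ᶠ k : VZ, h k * F (k + eZ j)) + (∑ᶠ k : VZ, h k * F (k - eZ j))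
      = ∑ᶠ k : VZ, (2 * Real.cos (c * ω j)) * (h k * F k) := by
    rw [← finsum_add_distrib finhFp finhFm]
    congr 1
    funext k
    rw [← mul_add, key k]
    ring
  have hfinhf : (Function.support fun k : VZ => h k * F k).Finite :=
    hfin.subset (support_mul_subset _ _)
  have pull2 : (∑ᶠ k : VZ, 2 * h k * F k) = 2 * ∑ᶠ k : VZ, h k * F k := by
    rw [show (fun k : VZ => 2 * h k * F k) = (fun k : VZ => 2 * (h k * F k)) from
      funext fun k => by ring]
    exact (mul_finsum _ _).symm
  have pullc : (∑ᶠ k : VZ, (2 * Real.cos (c * ω j)) * (h k * F k))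
      = (2 * Real.cos (c * ω j)) * ∑ᶠ k : VZ, h k * F k :=
    (mul_finsum _ _).symm
  rw [comb, pull2, pullc, S]
  ring

lemma LZ_iter_fin (j : Fin 3) (m : ℕ) (h : VZ → ℝ) (hfin : (Function.support h).Finite) :
    (Function.support ((LZ j)^[m] h)).Finite := by
  induction m with
  | zero => simpa using hfin
  | succ m ih => rw [Function.iterate_succ_apply']; exact LZ_fin j _ ih

lemma S_LZ_iter (c : ℝ) (n : ℕ) (j : Fin 3) (m : ℕ) (h : VZ → ℝ)
    (hfin : (Function.support h).Finite) (ω : V) :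
    S c n ((LZ j)^[m] h) ω = (2 - 2 * Real.cos (c * ω j)) ^ m * S c n h ω := by
  induction m with
  | zero => simp
  | succ m ih =>
    rw [Function.iterate_succ_apply', S_LZ c n j _ (LZ_iter_fin j m h hfin) ω, ih]
    ring

end KhatAux
namespace KhatAux

open Real

/-- smooth of all finite orders. -/
def SmA (u : V → ℝ) : Prop := ∀ n : ℕ, ContDiff ℝ n u

lemma SmA.diff {u : V → ℝ} (hu : SmA u) : Differentiable ℝ u :=
  (hu 1).differentiable (by norm_num)

lemma SmA.cont {u : V → ℝ} (hu : SmA u) : Continuous u := (hu 0).continuous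

lemma SmA.pdd {u : V → ℝ} (hu : SmA u) (j : Fin 3) : SmA (pd j u) := by
  intro n
  have h := (hu (n + 1)).fderiv_right (m := n) (by exact_mod_cast le_rfl)
  exact h.clm_apply contDiff_const

lemma pd_iter_SmA {u : V → ℝ} (hu : SmA u) (j : Fin 3) (p : ℕ) : SmA ((pd j)^[p] u) := by
  induction p with
  | zero => simpa using hu
  | succ p ih => rw [Function.iterate_succ_apply']; exact ih.pdd j

/-- unit vector in `V`. -/
def eV (j : Fin 3) : V := Pi.single j 1

/-- second-difference operator with step `γ` in direction `j`. -/
def Tg (γ : ℝ) (j : Fin 3) (u : V → ℝ) : V → ℝ :=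
  fun x => 2 * u x - u (x - γ • eV j) - u (x + γ • eV j)

lemma SmA.translate {u : V → ℝ} (hu : SmA u) (a : V) : SmA fun x => u (x + a) :=
  fun n => (hu n).comp (contDiff_id.add contDiff_const)

lemma SmA.translate' {u : V → ℝ} (hu : SmA u) (a : V) : SmA fun x => u (x - a) :=
  fun n => (hu n).comp (contDiff_id.sub contDiff_const)

lemma SmA.tg {u : V → ℝ} (hu : SmA u) (γ : ℝ) (j : Fin 3) : SmA (Tg γ j u) := by
  intro n
  exact ((contDiff_const.mul (hu n)).sub ((hu.translate' (γ • eV j)) n)).sub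
    ((hu.translate (γ • eV j)) n)

lemma tg_iter_SmA {u : V → ℝ} (hu : SmA u) (γ : ℝ) (j : Fin 3) (m : ℕ) :
    SmA ((Tg γ j)^[m] u) := by
  induction m with
  | zero => simpa using hu
  | succ m ih => rw [Function.iterate_succ_apply']; exact ih.tg γ j

lemma pd_translate {u : V → ℝ} (hu : Differentiable ℝ u) (j : Fin 3) (a : V) :
    pd j (fun x => u (x + a)) = fun x => pd j u (x + a) := by
  funext x
  have h1 : HasFDerivAt (fun y : V => y + a) (ContinuousLinearMap.id ℝ V) x :=
    (hasFDerivAt_id x).add_const a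
  have h : HasFDerivAt (fun y : V => u (y + a)) (fderiv ℝ u (x + a)) x := by
    exact ((hu (x + a)).hasFDerivAt.comp x h1).congr_fderiv (ContinuousLinearMap.comp_id _)
  show fderiv ℝ (fun y => u (y + a)) x (Pi.single j 1) = fderiv ℝ u (x + a) (Pi.single j 1)
  rw [h.fderiv]

lemma pd_translate' {u : V → ℝ} (hu : Differentiable ℝ u) (j : Fin 3) (a : V) :
    pd j (fun x => u (x - a)) = fun x => pd j u (x - a) := by
  funext x
  have h1 : HasFDerivAt (fun y : V => y - a) (ContinuousLinearMap.id ℝ V) x :=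
    (hasFDerivAt_id x).sub_const a
  have h : HasFDerivAt (fun y : V => u (y - a)) (fderiv ℝ u (x - a)) x := by
    exact ((hu (x - a)).hasFDerivAt.comp x h1).congr_fderiv (ContinuousLinearMap.comp_id _)
  show fderiv ℝ (fun y => u (y - a)) x (Pi.single j 1) = fderiv ℝ u (x - a) (Pi.single j 1)
  rw [h.fderiv]

lemma pd_sub {u v : V → ℝ} (hu : Differentiable ℝ u) (hv : Differentiable ℝ v) (j : Fin 3) :
    pd j (fun x => u x - v x) = fun x => pd j u x - pd j v x := by
  funext x
  show fderiv ℝ (fun x => u x - v x) x (Pi.single j 1) = _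
  rw [fderiv_fun_sub (hu x) (hv x)]
  rfl

lemma pd_const_mul {u : V → ℝ} (hu : Differentiable ℝ u) (a : ℝ) (j : Fin 3) :
    pd j (fun x => a * u x) = fun x => a * pd j u x := by
  funext x
  show fderiv ℝ (fun x => a * u x) x (Pi.single j 1) = _
  rw [fderiv_const_mul (hu x) a]
  rfl

lemma pd_tg {u : V → ℝ} (hu : SmA u) (γ : ℝ) (j j' : Fin 3) :
    pd j' (Tg γ j u) = Tg γ j (pd j' u) := by
  have hd := hu.diff
  have hdm : Differentiable ℝ fun x : V => u (x - γ • eV j) := by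
    exact hd.comp (differentiable_id.sub_const _)
  have hdp : Differentiable ℝ fun x : V => u (x + γ • eV j) := by
    exact hd.comp (differentiable_id.add_const _)
  have hd2 : Differentiable ℝ fun x : V => 2 * u x := by
    exact (differentiable_const (2:ℝ)).mul hd
  have h1 : Tg γ j u = fun x => (2 * u x - u (x - γ • eV j)) - u (x + γ • eV j) := rfl
  rw [h1]
  rw [pd_sub (u := fun x => 2 * u x - u (x - γ • eV j)) (hd2.sub hdm) hdp j', pd_sub hd2 hdm j', pd_const_mul hd 2 j']
  have h2 : pd j' (fun x => u (x - γ • eV j)) = fun x => pd j' u (x - γ • eV j) :=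
    pd_translate' hd j' _
  have h3 : pd j' (fun x => u (x + γ • eV j)) = fun x => pd j' u (x + γ • eV j) :=
    pd_translate hd j' _
  rw [h2, h3]
  rfl

lemma pd_tg_iter {u : V → ℝ} (hu : SmA u) (γ : ℝ) (j j' : Fin 3) (m : ℕ) :
    pd j' ((Tg γ j)^[m] u) = (Tg γ j)^[m] (pd j' u) := by
  induction m with
  | zero => simp
  | succ m ih =>
    rw [Function.iterate_succ_apply', Function.iterate_succ_apply',
      pd_tg (tg_iter_SmA hu γ j m) γ j j', ih]

lemma diff_bound {u : V → ℝ} (hu : Differentiable ℝ u) (j : Fin 3) {B : ℝ}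
    (hB : ∀ y, |pd j u y| ≤ B) {t : ℝ} (ht : 0 ≤ t) (x : V) :
    |u (x + t • eV j) - u x| ≤ t * B := by
  have key : ∀ s : ℝ, HasDerivAt (fun s : ℝ => u (x + s • eV j))
      (pd j u (x + s • eV j)) s := by
    intro s
    have h1 : HasDerivAt (fun s : ℝ => x + s • eV j) (eV j) s := by
      simpa using ((hasDerivAt_id s).smul_const (eV j)).const_add x
    have h2 := (hu (x + s • eV j)).hasFDerivAt.comp_hasDerivAt s h1
    have heV : fderiv ℝ u (x + s • eV j) (eV j) = pd j u (x + s • eV j) := rfl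
    rw [heV] at h2
    exact h2
  have hB' : ∀ s ∈ Set.Ico (0 : ℝ) t, ‖pd j u (x + s • eV j)‖ ≤ B := by
    intro s _
    simpa [Real.norm_eq_abs] using hB (x + s • eV j)
  have := norm_image_sub_le_of_norm_deriv_le_segment'
    (f := fun s : ℝ => u (x + s • eV j)) (f' := fun s : ℝ => pd j u (x + s • eV j))
    (a := 0) (b := t) (fun s _ => (key s).hasDerivWithinAt) hB' t ⟨ht, le_rfl⟩
  simpa [Real.norm_eq_abs, zero_smul, add_zero, sub_zero, mul_comm] using this

lemma tg_bound {u : V → ℝ} (hu : SmA u) {γ : ℝ} (hγ : 0 ≤ γ) (j : Fin 3) {B : ℝ}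
    (hB : ∀ y, |pd j (pd j u) y| ≤ B) (x : V) :
    |Tg γ j u x| ≤ γ ^ 2 * B := by
  have hd := hu.diff
  set v : V → ℝ := fun y => u y - u (y - γ • eV j) with hv
  have hdm : Differentiable ℝ fun y : V => u (y - γ • eV j) := by
    exact hd.comp (differentiable_id.sub_const _)
  have hvd : Differentiable ℝ v := hd.sub hdm
  have hpdv : ∀ y, |pd j v y| ≤ γ * B := by
    intro y
    have hsplit : pd j v = fun y => pd j u y - pd j u (y - γ • eV j) := by
      rw [hv, pd_sub hd hdm j, pd_translate' hd j _]
    rw [hsplit]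
    have hw := diff_bound (u := pd j u) (hu.pdd j).diff j hB hγ (y - γ • eV j)
    have hyy : y - γ • eV j + γ • eV j = y := by abel
    rw [hyy] at hw
    simpa [abs_sub_comm] using hw
  have hTv : Tg γ j u x = -(v (x + γ • eV j) - v x) := by
    simp only [hv, Tg]
    have : x + γ • eV j - γ • eV j = x := by abel
    rw [this]
    ring
  rw [hTv, abs_neg]
  calc |v (x + γ • eV j) - v x| ≤ γ * (γ * B) := diff_bound hvd j hpdv hγ x
  _ = γ ^ 2 * B := by ring

lemma tg_iter_bound {γ : ℝ} (hγ : 0 ≤ γ) (j : Fin 3) (m : ℕ) :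
    ∀ u : V → ℝ, SmA u → ∀ B : ℝ, (∀ y, |(pd j)^[2 * m] u y| ≤ B) →
      ∀ x, |(Tg γ j)^[m] u x| ≤ γ ^ (2 * m) * B := by
  induction m with
  | zero =>
    intro u _ B hB x
    simpa using hB x
  | succ m ih =>
    intro u hu B hB x
    rw [Function.iterate_succ_apply']
    have hcomm : pd j (pd j ((Tg γ j)^[m] u)) = (Tg γ j)^[m] (pd j (pd j u)) := by
      rw [pd_tg_iter hu γ j j m, pd_tg_iter (hu.pdd j) γ j j m]
    have hBmid : ∀ y, |pd j (pd j ((Tg γ j)^[m] u)) y| ≤ γ ^ (2 * m) * B := by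
      intro y
      rw [hcomm]
      apply ih (pd j (pd j u)) ((hu.pdd j).pdd j) B _ y
      intro y'
      have hiter : (pd j)^[2 * m] (pd j (pd j u)) = (pd j)^[2 * (m + 1)] u := by
        have h1 : 2 * (m + 1) = (2 * m + 1) + 1 := by ring
        rw [h1, Function.iterate_succ_apply, Function.iterate_succ_apply]
      rw [hiter]
      exact hB y'
    have := tg_bound (tg_iter_SmA hu γ j m) hγ j hBmid x
    calc |Tg γ j ((Tg γ j)^[m] u) x| ≤ γ ^ 2 * (γ ^ (2 * m) * B) := this
    _ = γ ^ (2 * (m + 1)) * B := by ring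

/-- vanishing outside a sup-norm box. -/
def Zb (R : ℝ) (u : V → ℝ) : Prop := ∀ x : V, (∃ i, R ≤ |x i|) → u x = 0

lemma Zb.mono {R R' : ℝ} {u : V → ℝ} (h : R ≤ R') (hZ : Zb R u) : Zb R' u := by
  intro x ⟨i, hi⟩
  exact hZ x ⟨i, le_trans h hi⟩

lemma eV_abs (j i : Fin 3) : |eV j i| ≤ 1 := by
  simp only [eV, Pi.single_apply]
  split <;> simp

lemma Zb.tg {R γ : ℝ} {u : V → ℝ} (hγ : 0 ≤ γ) (hZ : Zb R u) (j : Fin 3) :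
    Zb (R + γ) (Tg γ j u) := by
  rintro x ⟨i, hi⟩
  have h1 : u x = 0 := hZ x ⟨i, by linarith⟩
  have habs : |γ * eV j i| ≤ γ := by
    rw [abs_mul, abs_of_nonneg hγ]
    calc γ * |eV j i| ≤ γ * 1 := by
          exact mul_le_mul_of_nonneg_left (eV_abs j i) hγ
    _ = γ := mul_one γ
  have h2 : u (x - γ • eV j) = 0 := by
    apply hZ _ ⟨i, ?_⟩
    have : |x i| - |γ * eV j i| ≤ |x i - γ * eV j i| := by
      exact abs_sub_abs_le_abs_sub _ _
    have hpi : (x - γ • eV j) i = x i - γ * eV j i := rfl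
    rw [hpi]
    linarith
  have h3 : u (x + γ • eV j) = 0 := by
    apply hZ _ ⟨i, ?_⟩
    have : |x i| - |γ * eV j i| ≤ |x i + γ * eV j i| := by
      have := abs_sub_abs_le_abs_sub (x i) (-(γ * eV j i))
      simpa [sub_neg_eq_add] using this
    have hpi : (x + γ • eV j) i = x i + γ * eV j i := rfl
    rw [hpi]
    linarith
  simp [Tg, h1, h2, h3]

lemma Zb.tg_iter {R γ : ℝ} {u : V → ℝ} (hγ : 0 ≤ γ) (hZ : Zb R u) (j : Fin 3) (m : ℕ) :
    Zb (R + m * γ) ((Tg γ j)^[m] u) := by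
  induction m with
  | zero => simpa using hZ
  | succ m ih =>
    rw [Function.iterate_succ_apply']
    have := ih.tg hγ j
    apply this.mono ?_ |>.mono le_rfl
    push_cast
    nlinarith [hγ]

end KhatAux
namespace KhatAux

open Real

lemma sc_add (γ : ℝ) (k : VZ) (j : Fin 3) : sc γ (k + eZ j) = sc γ k + γ • eV j := by
  funext i
  simp only [sc, eZ, eV, Pi.add_apply, Pi.smul_apply, Pi.single_apply, smul_eq_mul]
  push_cast
  split <;> ring

lemma sc_sub (γ : ℝ) (k : VZ) (j : Fin 3) : sc γ (k - eZ j) = sc γ k - γ • eV j := by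
  funext i
  simp only [sc, eZ, eV, Pi.sub_apply, Pi.smul_apply, Pi.single_apply, smul_eq_mul]
  push_cast
  split <;> ring

lemma LZ_sc (A γ : ℝ) (u : V → ℝ) (j : Fin 3) :
    LZ j (fun k => A * u (sc γ k)) = fun k => A * (Tg γ j u) (sc γ k) := by
  funext k
  simp only [LZ, Tg, sc_add, sc_sub]
  ring

lemma LZ_sc_iter (A γ : ℝ) (u : V → ℝ) (j : Fin 3) (m : ℕ) :
    (LZ j)^[m] (fun k => A * u (sc γ k)) = fun k => A * ((Tg γ j)^[m] u) (sc γ k) := by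
  induction m generalizing u with
  | zero => simp
  | succ m ih =>
    rw [Function.iterate_succ_apply, LZ_sc, ih (Tg γ j u), ← Function.iterate_succ_apply]

lemma support_sc_subset {u : V → ℝ} {R γ : ℝ} (hγ : 0 < γ) (hZ : Zb R u) (A : ℝ)
    {M : ℕ} (hM : R ≤ γ * (M + 1)) :
    (Function.support fun k : VZ => A * u (sc γ k)) ⊆ ↑(ibox M) := by
  intro k hk
  simp only [Function.mem_support] at hk
  rw [Finset.mem_coe, ibox, Fintype.mem_piFinset]
  intro i
  rw [Finset.mem_Icc]
  by_contra hc
  apply hk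
  have habs : (M : ℝ) + 1 ≤ |(k i : ℝ)| := by
    rcases not_and_or.mp hc with h | h
    · push_neg at h
      have h1 : (k i : ℤ) ≤ -(M : ℤ) - 1 := by omega
      have h2 : ((k i : ℤ) : ℝ) ≤ ((-(M : ℤ) - 1 : ℤ) : ℝ) := by exact_mod_cast h1
      push_cast at h2
      exact le_abs.mpr (Or.inr (by linarith))
    · push_neg at h
      have h1 : (M : ℤ) + 1 ≤ (k i : ℤ) := by omega
      have h2 : (M : ℝ) + 1 ≤ ((k i : ℤ) : ℝ) := by exact_mod_cast h1
      exact le_abs.mpr (Or.inl h2)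
  have hu0 : u (sc γ k) = 0 := by
    apply hZ _ ⟨i, ?_⟩
    have : |sc γ k i| = γ * |(k i : ℝ)| := by
      rw [sc]
      rw [abs_mul, abs_of_pos hγ]
    rw [this]
    calc R ≤ γ * ((M : ℝ) + 1) := hM
    _ ≤ γ * |(k i : ℝ)| := by
        exact mul_le_mul_of_nonneg_left habs hγ.le
  rw [hu0, mul_zero]

lemma card_ibox (M : ℕ) : (ibox M).card = (2 * M + 1) ^ 3 := by
  rw [ibox, Fintype.card_piFinset]
  have h : ∀ i : Fin 3, (Finset.Icc (-(M : ℤ)) (M : ℤ)).card = 2 * M + 1 := by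
    intro i
    rw [Int.card_Icc]
    omega
  rw [Finset.prod_congr rfl fun i _ => h i]
  simp [Finset.prod_const]

lemma S_abs_le {h : VZ → ℝ} {T : Finset VZ} (hT : Function.support h ⊆ ↑T) {B : ℝ}
    (hB : ∀ k, |h k| ≤ B) (c : ℝ) (n : ℕ) (ω : V) :
    |S c n h ω| ≤ T.card * B := by
  rw [S_eq_sum hT]
  calc |∑ k ∈ T, h k * Real.cos (c * dz ω k + n * (Real.pi / 2))|
      ≤ ∑ k ∈ T, |h k * Real.cos (c * dz ω k + n * (Real.pi / 2))| :=
        Finset.abs_sum_le_sum_abs _ _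
  _ ≤ ∑ k ∈ T, B := by
      apply Finset.sum_le_sum
      intro k _
      rw [abs_mul]
      calc |h k| * |Real.cos (c * dz ω k + n * (Real.pi / 2))| ≤ |h k| * 1 :=
            mul_le_mul_of_nonneg_left (Real.abs_cos_le_one _) (abs_nonneg _)
      _ = |h k| := mul_one _
      _ ≤ B := hB k
  _ = T.card * B := by rw [Finset.sum_const, nsmul_eq_mul]

lemma abs_le_euclNorm (x : V) (i : Fin 3) : |x i| ≤ euclNorm x := by
  rw [euclNorm, ← Real.sqrt_sq_eq_abs]
  apply Real.sqrt_le_sqrt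
  exact Finset.single_le_sum (f := fun i => x i ^ 2) (fun i _ => sq_nonneg _)
    (Finset.mem_univ i)

lemma euclNorm_le_of_max {ω : V} {j : Fin 3} (hj : ∀ i, |ω i| ≤ |ω j|) :
    euclNorm ω ≤ Real.sqrt 3 * |ω j| := by
  rw [euclNorm]
  have h1 : (∑ i, ω i ^ 2) ≤ 3 * ω j ^ 2 := by
    have : ∀ i : Fin 3, ω i ^ 2 ≤ ω j ^ 2 := by
      intro i
      rw [← sq_abs (ω i), ← sq_abs (ω j)]
      exact pow_le_pow_left₀ (abs_nonneg _) (hj i) 2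
    calc (∑ i, ω i ^ 2) ≤ ∑ _i : Fin 3, ω j ^ 2 := Finset.sum_le_sum fun i _ => this i
    _ = 3 * ω j ^ 2 := by
        simp [Finset.sum_const, Fintype.card_fin]
        try ring
  calc Real.sqrt (∑ i, ω i ^ 2) ≤ Real.sqrt (3 * ω j ^ 2) := Real.sqrt_le_sqrt h1
  _ = Real.sqrt 3 * Real.sqrt (ω j ^ 2) := Real.sqrt_mul (by norm_num) _
  _ = Real.sqrt 3 * |ω j| := by rw [Real.sqrt_sq_eq_abs]

lemma cos_lower {θ : ℝ} (hθ : |θ| ≤ 3.5) : θ ^ 2 / 7 ≤ 1 - Real.cos θ := by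
  have hct : Real.cos θ = Real.cos |θ| := (Real.cos_abs θ).symm
  set t := |θ| with htdef
  have ht0 : 0 ≤ t := abs_nonneg _
  have ht2 : θ ^ 2 = t ^ 2 := (sq_abs θ).symm
  rw [hct, ht2]
  rcases le_or_gt t Real.pi with hle | hgt
  · have hhalf : t / 2 ≤ Real.pi / 2 := by linarith
    have hs := Real.mul_le_sin (x := t / 2) (by linarith) hhalf
    have hs0 : 0 ≤ 2 / Real.pi * (t / 2) := by positivity
    have hsq : (2 / Real.pi * (t / 2)) ^ 2 ≤ Real.sin (t / 2) ^ 2 := by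
      exact pow_le_pow_left₀ hs0 hs 2
    have hcos2 : Real.cos t = 1 - 2 * Real.sin (t / 2) ^ 2 := by
      have h1 : Real.cos (2 * (t / 2)) = Real.cos (t / 2) ^ 2 - Real.sin (t / 2) ^ 2 :=
        Real.cos_two_mul' (t / 2)
      have h2 : Real.sin (t / 2) ^ 2 + Real.cos (t / 2) ^ 2 = 1 :=
        Real.sin_sq_add_cos_sq (t / 2)
      have h3 : 2 * (t / 2) = t := by ring
      rw [h3] at h1
      linarith
    have hpi : Real.pi < 3.15 := Real.pi_lt_d2
    have hpipos : 0 < Real.pi := Real.pi_pos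
    rw [hcos2]
    have hs' : t / Real.pi ≤ Real.sin (t / 2) := by
      have h : 2 / Real.pi * (t / 2) = t / Real.pi := by ring
      rw [h] at hs
      exact hs
    have h5 : t ≤ Real.sin (t / 2) * Real.pi := (div_le_iff₀ hpipos).mp hs'
    have h6 : t ^ 2 ≤ (Real.sin (t / 2) * Real.pi) ^ 2 := by
      exact pow_le_pow_left₀ ht0 h5 2
    have hp2 : Real.pi ^ 2 < 14 := by nlinarith
    nlinarith [h6, hp2, sq_nonneg (Real.sin (t / 2)), sq_nonneg t]
  · have h1 : Real.cos t = -Real.cos (t - Real.pi) := by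
      have := Real.cos_add_pi (t - Real.pi)
      rw [sub_add_cancel] at this
      linarith
    have h2 : 1 - (t - Real.pi) ^ 2 / 2 ≤ Real.cos (t - Real.pi) :=
      Real.one_sub_sq_div_two_le_cos
    have hpi : 3.14 < Real.pi := Real.pi_gt_d2
    have ht35 : t ≤ 3.5 := hθ
    nlinarith [h1, h2]

end KhatAux
namespace KhatAux

open Real

variable {rstar : ℝ} {K : V → ℝ}

lemma kac_smA (hK : KacKernel rstar K) : SmA K := fun n => hK.smooth n

lemma kac_zb (hK : KacKernel rstar K) : Zb rstar K := by
  intro x ⟨i, hi⟩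
  exact hK.support_ball x (le_trans hi (abs_le_euclNorm x i))

lemma Zb.hasCompactSupport {R : ℝ} {u : V → ℝ} (hR : 0 ≤ R) (hZ : Zb R u) :
    HasCompactSupport u := by
  apply HasCompactSupport.intro (isCompact_closedBall (0 : V) R)
  intro x hx
  apply hZ
  simp only [Metric.mem_closedBall, dist_zero_right] at hx
  push_neg at hx
  have : ∃ i, R < |x i| := by
    by_contra hc
    push_neg at hc
    have : ‖x‖ ≤ R := by
      apply pi_norm_le_iff_of_nonneg hR |>.mpr
      intro i
      simpa [Real.norm_eq_abs] using hc i
    linarith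
  obtain ⟨i, hi⟩ := this
  exact ⟨i, hi.le⟩

lemma hasCompactSupport_pd {u : V → ℝ} (hu : HasCompactSupport u) (j : Fin 3) :
    HasCompactSupport (pd j u) := hu.fderiv_apply ℝ (Pi.single j 1)

lemma hasCompactSupport_pd_iter {u : V → ℝ} (hu : HasCompactSupport u) (j : Fin 3) (p : ℕ) :
    HasCompactSupport ((pd j)^[p] u) := by
  induction p with
  | zero => simpa using hu
  | succ p ih => rw [Function.iterate_succ_apply']; exact hasCompactSupport_pd ih j

lemma exists_pd_iter_bound {u : V → ℝ} (hu : SmA u) (hcs : HasCompactSupport u)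
    (j : Fin 3) (p : ℕ) : ∃ B : ℝ, ∀ x, |(pd j)^[p] u x| ≤ B := by
  obtain ⟨C, hC⟩ := (hasCompactSupport_pd_iter hcs j p).exists_bound_of_continuous
    (pd_iter_SmA hu j p).cont
  exact ⟨C, fun x => by simpa [Real.norm_eq_abs] using hC x⟩

/-- The Riemann-sum lower bound for `∑ γ³ K(γk)`. -/
lemma kappa_sum_lower (hrstar : 0 < rstar) (hK : KacKernel rstar K) :
    ∃ c₀ > (0 : ℝ), ∃ γ₁ > (0 : ℝ), γ₁ ≤ 1 ∧ ∀ γ : ℝ, 0 < γ → γ < γ₁ →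
      c₀ ≤ ∑ᶠ k : VZ, γ ^ 3 * K (sc γ k) := by
  classical
  -- find a point where K is positive
  have hx0 : ∃ x₀ : V, 0 < K x₀ := by
    by_contra hc
    push_neg at hc
    have hzero : K = fun _ => 0 := funext fun x => le_antisymm (hc x) (hK.nonneg x)
    have := hK.integral_one
    rw [hzero] at this
    simp at this
  obtain ⟨x₀, hx₀⟩ := hx0
  -- continuity gives a box where K is at least K x₀ / 2
  have hcont : ContinuousAt K x₀ := (kac_smA hK).cont.continuousAt
  have hopen : {y : V | K x₀ / 2 < K y} ∈ nhds x₀ := by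
    apply hcont.preimage_mem_nhds
    exact Ioi_mem_nhds (by linarith)
  obtain ⟨ρ, hρpos, hball⟩ := Metric.mem_nhds_iff.mp hopen
  set δ := K x₀ / 2 with hδ
  have hδpos : 0 < δ := by positivity
  refine ⟨δ * (ρ / 4) ^ 3, by positivity, min 1 (ρ / 4), by positivity,
    min_le_left _ _, ?_⟩
  intro γ hγ hγ1
  have hγρ : γ < ρ / 4 := lt_of_lt_of_le hγ1 (min_le_right _ _)
  -- the lattice box
  set q : Fin 3 → ℤ := fun i => ⌈x₀ i / γ⌉ with hq
  set n : ℕ := ⌊ρ / (4 * γ)⌋₊ with hn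
  set P : Finset VZ := Fintype.piFinset fun i => Finset.Icc (q i) (q i + n) with hP
  have hmem : ∀ k ∈ P, δ ≤ K (sc γ k) := by
    intro k hk
    rw [hP, Fintype.mem_piFinset] at hk
    have hdist : dist (sc γ k) x₀ < ρ := by
      rw [dist_pi_lt_iff hρpos]
      intro i
      have hki := hk i
      rw [Finset.mem_Icc] at hki
      have h1 : x₀ i ≤ γ * (q i : ℝ) := by
        rw [hq]
        have := Int.le_ceil (x₀ i / γ)
        calc x₀ i = γ * (x₀ i / γ) := by field_simp
        _ ≤ γ * (⌈x₀ i / γ⌉ : ℝ) := by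
            exact mul_le_mul_of_nonneg_left this hγ.le
      have h2 : γ * (q i : ℝ) < x₀ i + γ := by
        rw [hq]
        have := Int.ceil_lt_add_one (x₀ i / γ)
        have h3 : γ * (⌈x₀ i / γ⌉ : ℝ) < γ * (x₀ i / γ + 1) := by
          exact mul_lt_mul_of_pos_left this hγ
        have h4 : γ * (x₀ i / γ + 1) = x₀ i + γ := by field_simp
        linarith
      have h5 : (q i : ℝ) ≤ (k i : ℝ) := by exact_mod_cast hki.1
      have h6 : (k i : ℝ) ≤ (q i : ℝ) + n := by exact_mod_cast hki.2
      have h7 : γ * (n : ℝ) ≤ ρ / 4 := by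
        rw [hn]
        rcases le_or_gt (ρ / (4 * γ)) 0 with hc | hc
        · simp [Nat.floor_of_nonpos hc]
          positivity
        · have := Nat.floor_le (le_of_lt hc)
          calc γ * (⌊ρ / (4 * γ)⌋₊ : ℝ) ≤ γ * (ρ / (4 * γ)) := by
                exact mul_le_mul_of_nonneg_left this hγ.le
          _ = ρ / 4 := by field_simp
      have hsc : sc γ k i = γ * (k i : ℝ) := rfl
      rw [Real.dist_eq, hsc]
      have hlow : 0 ≤ γ * (k i : ℝ) - x₀ i := by
        have : γ * (q i : ℝ) ≤ γ * (k i : ℝ) := mul_le_mul_of_nonneg_left h5 hγ.le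
        linarith
      have hhigh : γ * (k i : ℝ) - x₀ i < ρ := by
        have : γ * (k i : ℝ) ≤ γ * ((q i : ℝ) + n) := mul_le_mul_of_nonneg_left h6 hγ.le
        have hexp : γ * ((q i : ℝ) + n) = γ * (q i : ℝ) + γ * n := by ring
        nlinarith
      rw [abs_of_nonneg hlow]
      exact hhigh
    have := hball hdist
    simp only [Set.mem_setOf_eq] at this
    rw [hδ]
    linarith
  -- sum over a large box dominating both P and the support
  have hZK := kac_zb hK
  have hfin : (Function.support fun k : VZ => γ ^ 3 * K (sc γ k)).Finite := by
    apply Set.Finite.subset (Finset.finite_toSet (ibox ⌈rstar / γ⌉₊))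
    apply support_sc_subset hγ hZK
    calc rstar = γ * (rstar / γ) := by field_simp
    _ ≤ γ * ((⌈rstar / γ⌉₊ : ℝ) + 1) := by
        apply mul_le_mul_of_nonneg_left _ hγ.le
        have := Nat.le_ceil (rstar / γ)
        linarith
  set T : Finset VZ := hfin.toFinset ∪ P with hT
  have hsupp : (Function.support fun k : VZ => γ ^ 3 * K (sc γ k)) ⊆ ↑T := by
    intro k hk
    rw [hT]
    simp only [Finset.coe_union, Set.mem_union]
    left
    rw [Set.Finite.coe_toFinset]
    exact hk
  rw [finsum_eq_finset_sum_of_support_subset _ hsupp]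
  have hsub : P ⊆ T := by rw [hT]; exact Finset.subset_union_right
  have hstep1 : ∑ k ∈ P, γ ^ 3 * K (sc γ k) ≤ ∑ k ∈ T, γ ^ 3 * K (sc γ k) := by
    apply Finset.sum_le_sum_of_subset_of_nonneg hsub
    intro k _ _
    have := hK.nonneg (sc γ k)
    positivity
  have hstep2 : δ * (ρ / 4) ^ 3 ≤ ∑ k ∈ P, γ ^ 3 * K (sc γ k) := by
    have hcard : P.card = (n + 1) ^ 3 := by
      rw [hP, Fintype.card_piFinset]
      have : ∀ i : Fin 3, (Finset.Icc (q i) (q i + n)).card = n + 1 := by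
        intro i
        rw [Int.card_Icc]
        omega
      rw [Finset.prod_congr rfl fun i _ => this i]
      simp [Finset.prod_const]
    have hterm : ∀ k ∈ P, γ ^ 3 * δ ≤ γ ^ 3 * K (sc γ k) := by
      intro k hk
      exact mul_le_mul_of_nonneg_left (hmem k hk) (by positivity)
    calc δ * (ρ / 4) ^ 3 ≤ ((n + 1) ^ 3 : ℕ) * (γ ^ 3 * δ) := by
          push_cast
          have hn1 : ρ / 4 ≤ γ * ((n : ℝ) + 1) := by
            rw [hn]
            have h1 : ρ / (4 * γ) < (⌊ρ / (4 * γ)⌋₊ : ℝ) + 1 := Nat.lt_floor_add_one _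
            have h2 : γ * (ρ / (4 * γ)) ≤ γ * ((⌊ρ / (4 * γ)⌋₊ : ℝ) + 1) :=
              mul_le_mul_of_nonneg_left h1.le hγ.le
            have h3 : γ * (ρ / (4 * γ)) = ρ / 4 := by field_simp
            linarith
          have hpow : (ρ / 4) ^ 3 ≤ (γ * ((n : ℝ) + 1)) ^ 3 := by
            apply pow_le_pow_left₀ (by positivity) hn1
          calc δ * (ρ / 4) ^ 3 ≤ δ * (γ * ((n : ℝ) + 1)) ^ 3 := by
                exact mul_le_mul_of_nonneg_left hpow hδpos.le
          _ = ((n : ℝ) + 1) ^ 3 * (γ ^ 3 * δ) := by ring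
    _ ≤ ∑ k ∈ P, γ ^ 3 * K (sc γ k) := by
          rw [← hcard]
          have := Finset.card_nsmul_le_sum P (fun k => γ ^ 3 * K (sc γ k)) (γ ^ 3 * δ) hterm
          rw [nsmul_eq_mul] at this
          exact this
  linarith

end KhatAux
namespace KhatAux

open Real

lemma Khat_eq_S (K : V → ℝ) (γ : ℝ)
    (hfin : (Function.support fun k : VZ => γ ^ 3 * K (sc γ k)).Finite) :
    Khat K γ = S (Real.pi * γ ^ 4) 0 (fun k => (kappa1 K γ * γ ^ 3) * K (sc γ k)) := by
  funext ω
  rw [Khat, S]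
  have hfin2 : (Function.support fun k : VZ =>
      γ ^ 3 * K (fun i => γ * (k i : ℝ)) *
        Real.cos (Real.pi * γ ^ 3 * ∑ i, ω i * (γ * (k i : ℝ)))).Finite := by
    apply hfin.subset
    intro k hk
    simp only [Function.mem_support] at hk ⊢
    intro h0
    apply hk
    have h0' : γ ^ 3 * K (fun i => γ * (k i : ℝ)) = 0 := h0
    rw [h0', zero_mul]
  rw [mul_finsum _ _]
  apply finsum_congr
  intro k
  have hsum : (∑ i, ω i * (γ * (k i : ℝ))) = γ * ∑ i, ω i * (k i : ℝ) := by
    rw [Finset.mul_sum]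
    apply Finset.sum_congr rfl
    intro i _
    ring
  have harg : Real.pi * γ ^ 3 * ∑ i, ω i * (γ * (k i : ℝ))
      = Real.pi * γ ^ 4 * dz ω k + (0 : ℕ) * (Real.pi / 2) := by
    rw [dz, hsum]
    push_cast
    ring
  rw [harg]
  have hKscK : K (fun i => γ * (k i : ℝ)) = K (sc γ k) := rfl
  rw [hKscK]
  ring

lemma support_mul_subset' (F : VZ → ℝ) (h : VZ → ℝ) :
    (Function.support fun k => F k * h k) ⊆ Function.support h := by
  intro k hk
  simp only [Function.mem_support] at hk ⊢
  intro h0; apply hk; rw [h0, mul_zero]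

lemma Dmulti_S (c : ℝ) (α : Fin 3 → ℕ) (h : VZ → ℝ)
    (hfin : (Function.support h).Finite) :
    Dmulti α (S c 0 h) = S c (α 2 + α 1 + α 0)
      (fun k => (c * (k 0 : ℝ)) ^ α 0 *
        ((c * (k 1 : ℝ)) ^ α 1 * ((c * (k 2 : ℝ)) ^ α 2 * h k))) := by
  unfold Dmulti
  have hfin2 : (Function.support fun k : VZ => (c * (k 2 : ℝ)) ^ α 2 * h k).Finite :=
    hfin.subset (support_mul_subset' _ _)
  have hfin1 : (Function.support fun k : VZ =>
      (c * (k 1 : ℝ)) ^ α 1 * ((c * (k 2 : ℝ)) ^ α 2 * h k)).Finite :=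
    hfin2.subset (support_mul_subset' _ _)
  rw [pd_iter_S c 2 (α 2) 0 h hfin, pd_iter_S c 1 (α 1) (0 + α 2) _ hfin2,
    pd_iter_S c 0 (α 0) (0 + α 2 + α 1) _ hfin1]
  simp only [Nat.zero_add]

end KhatAux
open KhatAux in
set_option maxHeartbeats 1000000 in
/-- Polynomial decay of all derivatives of `K̂_γ` beyond the scale
`|ω| ≳ γ⁻³`: `|γ³ω|^{2m} |D^k K̂_γ(ω)| ≤ C γ^{3|k|₁}` on `[−N−1/2, N+1/2]³`. -/
theorem Khat_derivative_decay (rstar : ℝ) (hrstar : 0 < rstar)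
    (K : V → ℝ) (hK : KacKernel rstar K) :
    ∀ k : Fin 3 → ℕ, ∀ m : ℕ, ∃ C > (0 : ℝ), ∃ γ₀ > (0 : ℝ),
      ∀ γ ∈ Set.Ioo (0 : ℝ) γ₀, ∀ ω : V, (∀ i, |ω i| ≤ (Ndef γ : ℝ) + 1 / 2) →
        (γ ^ 3 * euclNorm ω) ^ (2 * m) * |Dmulti k (Khat K γ) ω| ≤
          C * γ ^ (3 * (k 0 + k 1 + k 2)) := by
  intro α m
  classical
  set nrm : ℕ := α 0 + α 1 + α 2 with hnrm
  set G : V → ℝ := fun x => (∏ i, x i ^ α i) * K x with hG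
  have hKsm : SmA K := kac_smA hK
  have hGsm : SmA G := by
    intro n
    apply ContDiff.mul _ (hK.smooth n)
    apply contDiff_prod
    intro i _
    exact ((ContinuousLinearMap.proj (R := ℝ) (φ := fun _ : Fin 3 => ℝ) i).contDiff).pow (α i)
  have hZK : Zb rstar K := kac_zb hK
  have hZG : Zb rstar G := by
    intro x hx
    rw [hG]
    simp only
    rw [hZK x hx, mul_zero]
  have hGcs : HasCompactSupport G := hZG.hasCompactSupport hrstar.le
  obtain ⟨B0, hB0⟩ := exists_pd_iter_bound hGsm hGcs 0 (2 * m)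
  obtain ⟨B1, hB1⟩ := exists_pd_iter_bound hGsm hGcs 1 (2 * m)
  obtain ⟨B2, hB2⟩ := exists_pd_iter_bound hGsm hGcs 2 (2 * m)
  set B : ℝ := max (max B0 B1) (max B2 1) with hB
  have hB1le : (1 : ℝ) ≤ B := le_max_of_le_right (le_max_right _ _)
  have hBpos : 0 < B := lt_of_lt_of_le one_pos hB1le
  have hBj : ∀ j : Fin 3, ∀ y, |(pd j)^[2 * m] G y| ≤ B := by
    intro j y
    fin_cases j
    · exact le_trans (hB0 y) (le_max_of_le_left (le_max_left _ _))
    · exact le_trans (hB1 y) (le_max_of_le_left (le_max_right _ _))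
    · exact le_trans (hB2 y) (le_max_of_le_right (le_max_left _ _))
  obtain ⟨c₀, hc₀, γ₁, hγ₁, hγ₁le, hlow⟩ := kappa_sum_lower hrstar hK
  set c₂ : ℝ := 2 * rstar + 2 * m + 3 with hc₂
  have hc₂pos : 0 < c₂ := by rw [hc₂]; positivity
  set Q : ℝ := (1 / c₀) * c₂ ^ 3 * Real.pi ^ nrm * B with hQ
  have hQpos : 0 < Q := by rw [hQ]; positivity
  refine ⟨3 ^ m * (7 / (2 * Real.pi ^ 2)) ^ m * Q, by positivity, min γ₁ (1 / 2),
    by positivity, ?_⟩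
  rintro γ ⟨hγpos, hγlt⟩ ω hω
  have hγγ₁ : γ < γ₁ := lt_of_lt_of_le hγlt (min_le_left _ _)
  have hγhalf : γ < 1 / 2 := lt_of_lt_of_le hγlt (min_le_right _ _)
  have hγle1 : γ ≤ 1 := by linarith
  set c : ℝ := Real.pi * γ ^ 4 with hc
  set κ : ℝ := kappa1 K γ with hκ
  -- κ facts
  have hsum : c₀ ≤ ∑ᶠ k : VZ, γ ^ 3 * K (sc γ k) := hlow γ hγpos hγγ₁
  have hsumpos : 0 < ∑ᶠ k : VZ, γ ^ 3 * K (sc γ k) := lt_of_lt_of_le hc₀ hsum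
  have hκval : κ = (∑ᶠ k : VZ, γ ^ 3 * K (sc γ k))⁻¹ := rfl
  have hκpos : 0 < κ := by rw [hκval]; positivity
  have hκle : κ ≤ 1 / c₀ := by
    rw [hκval, one_div]
    exact inv_anti₀ hc₀ hsum
  -- support boxes
  set Mbig : ℕ := ⌈rstar / γ⌉₊ + m with hMbig
  have hceil : (⌈rstar / γ⌉₊ : ℝ) < rstar / γ + 1 := Nat.ceil_lt_add_one (by positivity)
  have h8 : γ * (⌈rstar / γ⌉₊ : ℝ) ≤ rstar + γ := by
    have h9 := mul_lt_mul_of_pos_left hceil hγpos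
    have h10 : γ * (rstar / γ + 1) = rstar + γ := by field_simp
    linarith
  have hm0 : (0 : ℝ) ≤ m := Nat.cast_nonneg m
  have h11 : rstar / γ ≤ (⌈rstar / γ⌉₊ : ℝ) := Nat.le_ceil _
  have h12 : γ * (rstar / γ) ≤ γ * (⌈rstar / γ⌉₊ : ℝ) :=
    mul_le_mul_of_nonneg_left h11 hγpos.le
  have h13 : γ * (rstar / γ) = rstar := by field_simp
  have hmγ : (m : ℝ) * γ ≤ (m : ℝ) := mul_le_of_le_one_right hm0 hγle1
  have hRS1 : rstar ≤ γ * ((Mbig : ℝ) + 1) := by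
    rw [hMbig]
    push_cast
    have :  γ * ((⌈rstar / γ⌉₊ : ℝ) + (m : ℝ) + 1)
        = γ * (⌈rstar / γ⌉₊ : ℝ) + γ * (m : ℝ) + γ := by ring
    rw [this]
    nlinarith [mul_nonneg hγpos.le hm0]
  have hRSm : rstar + m * γ ≤ γ * ((Mbig : ℝ) + 1) := by
    rw [hMbig]
    push_cast
    have :  γ * ((⌈rstar / γ⌉₊ : ℝ) + (m : ℝ) + 1)
        = γ * (⌈rstar / γ⌉₊ : ℝ) + (m : ℝ) * γ + γ := by ring
    rw [this]
    linarith
  have hMγ : (2 * (Mbig : ℝ) + 1) * γ ≤ c₂ := by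
    rw [hMbig, hc₂]
    push_cast
    have :  (2 * ((⌈rstar / γ⌉₊ : ℝ) + (m : ℝ)) + 1) * γ
        = 2 * (γ * (⌈rstar / γ⌉₊ : ℝ)) + 2 * ((m : ℝ) * γ) + γ := by ring
    rw [this]
    linarith
  -- the base coefficient
  have hfinγK : (Function.support fun k : VZ => γ ^ 3 * K (sc γ k)).Finite :=
    Set.Finite.subset (Finset.finite_toSet (ibox Mbig))
      (support_sc_subset hγpos hZK (γ ^ 3) hRS1)
  set g : VZ → ℝ := fun k => (κ * γ ^ 3) * K (sc γ k) with hg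
  have hfing : (Function.support g).Finite :=
    Set.Finite.subset (Finset.finite_toSet (ibox Mbig))
      (support_sc_subset hγpos hZK (κ * γ ^ 3) hRS1)
  have hKhat : Khat K γ = S c 0 g := Khat_eq_S K γ hfinγK
  set hα : VZ → ℝ := fun k => (c * (k 0 : ℝ)) ^ α 0 *
    ((c * (k 1 : ℝ)) ^ α 1 * ((c * (k 2 : ℝ)) ^ α 2 * g k)) with hhα
  have hDm : Dmulti α (Khat K γ) = S c (α 2 + α 1 + α 0) hα := by
    rw [hKhat, Dmulti_S c α g hfing]
  set A : ℝ := (κ * γ ^ 3) * (Real.pi * γ ^ 3) ^ nrm with hA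
  have hApos : 0 < A := by rw [hA]; positivity
  have hαG : hα = fun k => A * G (sc γ k) := by
    funext k
    rw [hhα, hA, hg, hG, hnrm, hc]
    simp only [sc, Fin.prod_univ_three]
    ring
  -- the per-direction estimate
  have h2c : ∀ j : Fin 3, 0 ≤ 2 - 2 * Real.cos (c * ω j) := by
    intro j
    nlinarith [Real.cos_le_one (c * ω j)]
  have main_est : ∀ j : Fin 3,
      (2 - 2 * Real.cos (c * ω j)) ^ m * |Dmulti α (Khat K γ) ω| ≤
        Q * (γ ^ (2 * m) * γ ^ (3 * nrm)) := by
    intro j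
    have hfinA : (Function.support fun k : VZ => A * G (sc γ k)).Finite :=
      Set.Finite.subset (Finset.finite_toSet (ibox Mbig))
        (support_sc_subset hγpos hZG A hRS1)
    have hiter := S_LZ_iter c (α 2 + α 1 + α 0) j m (fun k => A * G (sc γ k)) hfinA ω
    have hLZG := LZ_sc_iter A γ G j m
    have hTb : ∀ x, |(Tg γ j)^[m] G x| ≤ γ ^ (2 * m) * B :=
      tg_iter_bound hγpos.le j m G hGsm B (hBj j)
    have hZTg : Zb (rstar + m * γ) ((Tg γ j)^[m] G) := hZG.tg_iter hγpos.le j m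
    have hsupp2 : (Function.support fun k : VZ => A * ((Tg γ j)^[m] G) (sc γ k))
        ⊆ ↑(ibox Mbig) := support_sc_subset hγpos hZTg A hRSm
    have habsA : ∀ k : VZ, |A * ((Tg γ j)^[m] G) (sc γ k)| ≤ A * (γ ^ (2 * m) * B) := by
      intro k
      rw [abs_mul, abs_of_pos hApos]
      exact mul_le_mul_of_nonneg_left (hTb _) hApos.le
    have hSb := S_abs_le hsupp2 habsA c (α 2 + α 1 + α 0) ω
    -- identify LHS
    have hstart : (2 - 2 * Real.cos (c * ω j)) ^ m * |Dmulti α (Khat K γ) ω|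
        = |S c (α 2 + α 1 + α 0) ((LZ j)^[m] fun k => A * G (sc γ k)) ω| := by
      rw [hDm, hαG, hiter, abs_mul, abs_of_nonneg (pow_nonneg (h2c j) m)]
    rw [hstart, hLZG]
    -- numeric combination
    have hcard : ((ibox Mbig).card : ℝ) = (2 * (Mbig : ℝ) + 1) ^ 3 := by
      rw [card_ibox]
      push_cast
      ring
    calc |S c (α 2 + α 1 + α 0) (fun k => A * ((Tg γ j)^[m] G) (sc γ k)) ω|
        ≤ ((ibox Mbig).card : ℝ) * (A * (γ ^ (2 * m) * B)) := hSb
    _ = ((2 * (Mbig : ℝ) + 1) * γ) ^ 3 *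
          (κ * (Real.pi ^ nrm * (γ ^ (3 * nrm) * (γ ^ (2 * m) * B)))) := by
        rw [hcard, hA]
        rw [mul_pow (Real.pi) (γ ^ 3) nrm, ← pow_mul γ 3 nrm]
        ring
    _ ≤ c₂ ^ 3 * ((1 / c₀) * (Real.pi ^ nrm * (γ ^ (3 * nrm) * (γ ^ (2 * m) * B)))) := by
        have hb1 : ((2 * (Mbig : ℝ) + 1) * γ) ^ 3 ≤ c₂ ^ 3 :=
          pow_le_pow_left₀ (by positivity) hMγ 3
        have hb2 : κ * (Real.pi ^ nrm * (γ ^ (3 * nrm) * (γ ^ (2 * m) * B)))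
            ≤ (1 / c₀) * (Real.pi ^ nrm * (γ ^ (3 * nrm) * (γ ^ (2 * m) * B))) :=
          mul_le_mul_of_nonneg_right hκle (by positivity)
        have hlhs0 : 0 ≤ κ * (Real.pi ^ nrm * (γ ^ (3 * nrm) * (γ ^ (2 * m) * B))) := by
          positivity
        exact mul_le_mul hb1 hb2 hlhs0 (by positivity)
    _ = Q * (γ ^ (2 * m) * γ ^ (3 * nrm)) := by rw [hQ]; ring
  -- choose the maximal coordinate
  obtain ⟨j, _, hjmax⟩ := Finset.exists_max_image Finset.univ (fun i => |ω i|)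
    ⟨0, Finset.mem_univ 0⟩
  have hjm : ∀ i, |ω i| ≤ |ω j| := fun i => hjmax i (Finset.mem_univ i)
  -- range of the angle
  have hNle : (Ndef γ : ℝ) ≤ γ⁻¹ ^ 4 := Nat.floor_le (by positivity)
  have hγ4inv : γ ^ 4 * γ⁻¹ ^ 4 = 1 := by
    field_simp
  have hγ4le : γ ^ 4 ≤ 1 / 16 := by
    have := pow_le_pow_left₀ hγpos.le hγhalf.le 4
    norm_num at this
    linarith
  have hθrange : |c * ω j| ≤ 3.5 := by
    rw [hc, abs_mul, abs_of_pos (by positivity : (0:ℝ) < Real.pi * γ ^ 4)]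
    have hωj : |ω j| ≤ (Ndef γ : ℝ) + 1 / 2 := hω j
    have h1 : γ ^ 4 * |ω j| ≤ γ ^ 4 * ((Ndef γ : ℝ) + 1 / 2) :=
      mul_le_mul_of_nonneg_left hωj (by positivity)
    have h2 : γ ^ 4 * ((Ndef γ : ℝ) + 1 / 2) ≤ 1 + 1 / 32 := by
      have h3 : γ ^ 4 * (Ndef γ : ℝ) ≤ γ ^ 4 * γ⁻¹ ^ 4 :=
        mul_le_mul_of_nonneg_left hNle (by positivity)
      nlinarith
    have hpi : Real.pi < 3.15 := Real.pi_lt_d2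
    nlinarith [Real.pi_pos, abs_nonneg (ω j)]
  have hcoslow := cos_lower hθrange
  have hkey2 : (γ ^ 4 * |ω j|) ^ 2 ≤ (7 / (2 * Real.pi ^ 2)) * (2 - 2 * Real.cos (c * ω j)) := by
    have hexp : (c * ω j) ^ 2 = Real.pi ^ 2 * (γ ^ 4 * |ω j|) ^ 2 := by
      rw [hc]
      rw [mul_pow, mul_pow, mul_pow, sq_abs]
      ring
    have h7 : Real.pi ^ 2 * (γ ^ 4 * |ω j|) ^ 2 ≤ 7 * (1 - Real.cos (c * ω j)) := by
      rw [← hexp]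
      nlinarith [hcoslow]
    have hPpos : (0:ℝ) < Real.pi ^ 2 := by positivity
    have h9 : (γ ^ 4 * |ω j|) ^ 2 ≤ 7 * (1 - Real.cos (c * ω j)) / Real.pi ^ 2 := by
      rw [le_div_iff₀ hPpos]
      linarith [h7]
    calc (γ ^ 4 * |ω j|) ^ 2 ≤ 7 * (1 - Real.cos (c * ω j)) / Real.pi ^ 2 := h9
    _ = (7 / (2 * Real.pi ^ 2)) * (2 - 2 * Real.cos (c * ω j)) := by
        field_simp
  have hpow2 : ((γ ^ 4 * |ω j|) ^ 2) ^ m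
      ≤ ((7 / (2 * Real.pi ^ 2)) * (2 - 2 * Real.cos (c * ω j))) ^ m :=
    pow_le_pow_left₀ (by positivity) hkey2 m
  set D : ℝ := |Dmulti α (Khat K γ) ω| with hD
  have hD0 : 0 ≤ D := abs_nonneg _
  have step1 : (γ ^ 3 * euclNorm ω) ^ (2 * m) ≤ 3 ^ m * (γ ^ 3 * |ω j|) ^ (2 * m) := by
    have hEn : euclNorm ω ≤ Real.sqrt 3 * |ω j| := euclNorm_le_of_max hjm
    have h1 : γ ^ 3 * euclNorm ω ≤ Real.sqrt 3 * (γ ^ 3 * |ω j|) := by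
      calc γ ^ 3 * euclNorm ω ≤ γ ^ 3 * (Real.sqrt 3 * |ω j|) :=
            mul_le_mul_of_nonneg_left hEn (by positivity)
      _ = Real.sqrt 3 * (γ ^ 3 * |ω j|) := by ring
    have h2 : 0 ≤ γ ^ 3 * euclNorm ω := by
      apply mul_nonneg (by positivity)
      rw [euclNorm]
      exact Real.sqrt_nonneg _
    calc (γ ^ 3 * euclNorm ω) ^ (2 * m)
        ≤ (Real.sqrt 3 * (γ ^ 3 * |ω j|)) ^ (2 * m) := pow_le_pow_left₀ h2 h1 _
    _ = 3 ^ m * (γ ^ 3 * |ω j|) ^ (2 * m) := by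
        rw [mul_pow]
        congr 1
        rw [pow_mul, Real.sq_sqrt (by norm_num : (0:ℝ) ≤ 3)]
  have step2 : γ ^ (2 * m) * ((γ ^ 3 * |ω j|) ^ (2 * m) * D)
      ≤ (7 / (2 * Real.pi ^ 2)) ^ m * (Q * (γ ^ (2 * m) * γ ^ (3 * nrm))) := by
    have lhs_eq : γ ^ (2 * m) * ((γ ^ 3 * |ω j|) ^ (2 * m) * D)
        = ((γ ^ 4 * |ω j|) ^ 2) ^ m * D := by
      rw [← pow_mul, mul_pow, mul_pow, ← pow_mul, ← pow_mul]
      ring_nf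
    rw [lhs_eq]
    calc ((γ ^ 4 * |ω j|) ^ 2) ^ m * D
        ≤ ((7 / (2 * Real.pi ^ 2)) * (2 - 2 * Real.cos (c * ω j))) ^ m * D :=
          mul_le_mul_of_nonneg_right hpow2 hD0
    _ = (7 / (2 * Real.pi ^ 2)) ^ m * ((2 - 2 * Real.cos (c * ω j)) ^ m * D) := by
        rw [mul_pow]
        ring
    _ ≤ (7 / (2 * Real.pi ^ 2)) ^ m * (Q * (γ ^ (2 * m) * γ ^ (3 * nrm))) :=
        mul_le_mul_of_nonneg_left (main_est j) (by positivity)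
  have step3 : (γ ^ 3 * |ω j|) ^ (2 * m) * D
      ≤ (7 / (2 * Real.pi ^ 2)) ^ m * (Q * γ ^ (3 * nrm)) := by
    have hγpow : 0 < γ ^ (2 * m) := by positivity
    have h := step2
    rw [show (7 / (2 * Real.pi ^ 2)) ^ m * (Q * (γ ^ (2 * m) * γ ^ (3 * nrm)))
        = γ ^ (2 * m) * ((7 / (2 * Real.pi ^ 2)) ^ m * (Q * γ ^ (3 * nrm))) from by ring] at h
    exact le_of_mul_le_mul_left h hγpow
  calc (γ ^ 3 * euclNorm ω) ^ (2 * m) * D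
      ≤ (3 ^ m * (γ ^ 3 * |ω j|) ^ (2 * m)) * D := mul_le_mul_of_nonneg_right step1 hD0
  _ = 3 ^ m * ((γ ^ 3 * |ω j|) ^ (2 * m) * D) := by ring
  _ ≤ 3 ^ m * ((7 / (2 * Real.pi ^ 2)) ^ m * (Q * γ ^ (3 * nrm))) :=
      mul_le_mul_of_nonneg_left step3 (by positivity)
  _ = 3 ^ m * (7 / (2 * Real.pi ^ 2)) ^ m * Q * γ ^ (3 * nrm) := by ring
end
end
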